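/- arXiv:2208.08529 — 4 statements merged into one kernel-verified Lean document; each statement's English description precedes it below -/
import Mathlib

section
/- For the planar system x' = xy, y' = y² − x − 1 with F(x,y) = (xy, y² − x − 1), the function φ₁(x,y) = x/(1 + x + y) satisfies ∇φ₁·F = φ₁ and the function φ₂(x,y) = x/(1 + x − y) satisfies ∇φ₂·F = −φ₂, wherever the denominators are nonzero. -/
theorem stmt_13
    (F : ℝ × ℝ → ℝ × ℝ) (hF : F = fun p => (p.1 * p.2, p.2 ^ 2 - p.1 - 1)) :
    (∀ p : ℝ × ℝ, 1 + p.1 + p.2 ≠ 0 →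
      fderiv ℝ (fun q : ℝ × ℝ => q.1 / (1 + q.1 + q.2)) p (F p)
        = p.1 / (1 + p.1 + p.2)) ∧
    (∀ p : ℝ × ℝ, 1 + p.1 - p.2 ≠ 0 →
      fderiv ℝ (fun q : ℝ × ℝ => q.1 / (1 + q.1 - q.2)) p (F p)
        = -(p.1 / (1 + p.1 - p.2))) := by
  subst hF
  constructor
  · intro p hne
    have hf : HasFDerivAt (fun q : ℝ × ℝ => q.1) (ContinuousLinearMap.fst ℝ ℝ ℝ) p :=
      hasFDerivAt_fst
    have hg : HasFDerivAt (fun q : ℝ × ℝ => 1 + q.1 + q.2)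
        (ContinuousLinearMap.fst ℝ ℝ ℝ + ContinuousLinearMap.snd ℝ ℝ ℝ) p :=
      (hasFDerivAt_fst.const_add 1).add hasFDerivAt_snd
    have hinv : HasFDerivAt (fun q : ℝ × ℝ => (1 + q.1 + q.2)⁻¹)
        ((ContinuousLinearMap.smulRight (1 : ℝ →L[ℝ] ℝ)
          (-((1 + p.1 + p.2) ^ 2)⁻¹)).comp
            (ContinuousLinearMap.fst ℝ ℝ ℝ + ContinuousLinearMap.snd ℝ ℝ ℝ)) p :=
      (hasFDerivAt_inv hne).comp p hg
    have hmul : fderiv ℝ (fun q : ℝ × ℝ => q.1 * (1 + q.1 + q.2)⁻¹) p = _ :=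
      (hf.mul hinv).fderiv
    have heq : (fun q : ℝ × ℝ => q.1 / (1 + q.1 + q.2))
        = fun q : ℝ × ℝ => q.1 * (1 + q.1 + q.2)⁻¹ := by
      funext q; rw [div_eq_mul_inv]
    rw [heq, hmul]
    simp
    field_simp
    ring
  · intro p hne
    have hf : HasFDerivAt (fun q : ℝ × ℝ => q.1) (ContinuousLinearMap.fst ℝ ℝ ℝ) p :=
      hasFDerivAt_fst
    have hg : HasFDerivAt (fun q : ℝ × ℝ => 1 + q.1 - q.2)
        (ContinuousLinearMap.fst ℝ ℝ ℝ - ContinuousLinearMap.snd ℝ ℝ ℝ) p :=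
      (hasFDerivAt_fst.const_add 1).sub hasFDerivAt_snd
    have hinv : HasFDerivAt (fun q : ℝ × ℝ => (1 + q.1 - q.2)⁻¹)
        ((ContinuousLinearMap.smulRight (1 : ℝ →L[ℝ] ℝ)
          (-((1 + p.1 - p.2) ^ 2)⁻¹)).comp
            (ContinuousLinearMap.fst ℝ ℝ ℝ - ContinuousLinearMap.snd ℝ ℝ ℝ)) p :=
      (hasFDerivAt_inv hne).comp p hg
    have hmul : fderiv ℝ (fun q : ℝ × ℝ => q.1 * (1 + q.1 - q.2)⁻¹) p = _ :=
      (hf.mul hinv).fderiv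
    have heq : (fun q : ℝ × ℝ => q.1 / (1 + q.1 - q.2))
        = fun q : ℝ × ℝ => q.1 * (1 + q.1 - q.2)⁻¹ := by
      funext q; rw [div_eq_mul_inv]
    rw [heq, hmul]
    simp
    field_simp
    ring
end

section
/- Let a = x₀/(1 + x₀ + y₀) and b = x₀/(1 + x₀ − y₀) with denominators nonzero. Then x(t) = 2ab/(a e^t + b e^{−t} − 2ab) and y(t) = (−a e^t + b e^{−t})/(a e^t + b e^{−t} − 2ab) satisfy x' = xy and y' = y² − x − 1 with x(0) = x₀, y(0) = y₀, on any interval where a e^t + b e^{−t} − 2ab ≠ 0. -/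
theorem stmt_14 (x₀ y₀ a b : ℝ)
    (h₁ : 1 + x₀ + y₀ ≠ 0) (h₂ : 1 + x₀ - y₀ ≠ 0)
    (ha : a = x₀ / (1 + x₀ + y₀)) (hb : b = x₀ / (1 + x₀ - y₀))
    (x y : ℝ → ℝ)
    (hx : x = fun t => 2 * a * b / (a * Real.exp t + b * Real.exp (-t) - 2 * a * b))
    (hy : y = fun t => (-(a * Real.exp t) + b * Real.exp (-t)) /
        (a * Real.exp t + b * Real.exp (-t) - 2 * a * b))
    (hD0 : a + b - 2 * a * b ≠ 0) :
    x 0 = x₀ ∧ y 0 = y₀ ∧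
    ∀ t : ℝ, a * Real.exp t + b * Real.exp (-t) - 2 * a * b ≠ 0 →
      HasDerivAt x (x t * y t) t ∧ HasDerivAt y ((y t) ^ 2 - x t - 1) t := by
  refine ⟨?_, ?_, ?_⟩
  · rw [hx]
    simp only [neg_zero, Real.exp_zero, mul_one]
    rw [div_eq_iff hD0]
    subst ha hb
    field_simp
    ring
  · rw [hy]
    simp only [neg_zero, Real.exp_zero, mul_one]
    rw [div_eq_iff hD0]
    subst ha hb
    field_simp
    ring
  · intro t hDt
    have h1 : HasDerivAt (fun s => a * Real.exp s) (a * Real.exp t) t :=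
      (Real.hasDerivAt_exp t).const_mul a
    have h2 : HasDerivAt (fun s : ℝ => b * Real.exp (-s)) (-(b * Real.exp (-t))) t := by
      have := ((Real.hasDerivAt_exp (-t)).comp t (hasDerivAt_neg t)).const_mul b
      simpa [mul_comm] using this
    have hD : HasDerivAt (fun s => a * Real.exp s + b * Real.exp (-s) - 2 * a * b)
        (a * Real.exp t - b * Real.exp (-t)) t := by
      have := (h1.add h2).sub_const (2 * a * b)
      exact this.congr_deriv (by ring)
    have hN : HasDerivAt (fun s => -(a * Real.exp s) + b * Real.exp (-s))
        (-(a * Real.exp t) - b * Real.exp (-t)) t := by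
      have := h1.neg.add h2
      exact this.congr_deriv (by ring)
    have hxd : HasDerivAt x
        ((0 * (a * Real.exp t + b * Real.exp (-t) - 2 * a * b) -
          2 * a * b * (a * Real.exp t - b * Real.exp (-t))) /
          (a * Real.exp t + b * Real.exp (-t) - 2 * a * b) ^ 2) t := by
      rw [hx]
      exact (hasDerivAt_const t (2 * a * b)).div hD hDt
    have hyd : HasDerivAt y
        (((-(a * Real.exp t) - b * Real.exp (-t)) *
            (a * Real.exp t + b * Real.exp (-t) - 2 * a * b) -
          (-(a * Real.exp t) + b * Real.exp (-t)) *
            (a * Real.exp t - b * Real.exp (-t))) /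
          (a * Real.exp t + b * Real.exp (-t) - 2 * a * b) ^ 2) t := by
      rw [hy]
      exact hN.div hD hDt
    constructor
    · convert hxd using 1
      rw [hx, hy]
      simp only
      field_simp
      ring
    · convert hyd using 1
      rw [hx, hy]
      simp only
      field_simp
      rw [div_sub_one]
      · ring
      · exact pow_ne_zero 2 (by convert hDt using 1; ring)
end

section
/- For the planar system x' = x − xy, y' = −x − y − y² with F(x,y) = (x − xy, −x − y − y²), the functions M₁ = x, M₂ = x + 2y, M₃ = 1 + x + y satisfy ∇M₁·F = M₁(1 − y), ∇M₂·F = M₂(−1 − y), and ∇M₃·F = M₃(−y). Consequently φ₁ = M₃/M₁ and φ₂ = M₃/M₂ satisfy ∇φ₁·F = −φ₁ and ∇φ₂·F = φ₂ where the denominators are nonzero. -/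
open ContinuousLinearMap

lemma hM1 (p : ℝ × ℝ) : HasFDerivAt (fun q : ℝ × ℝ => q.1)
    (fst ℝ ℝ ℝ) p := hasFDerivAt_fst

lemma hM2 (p : ℝ × ℝ) : HasFDerivAt (fun q : ℝ × ℝ => q.1 + 2 * q.2)
    (fst ℝ ℝ ℝ + (2:ℝ) • snd ℝ ℝ ℝ) p := by
  exact (hasFDerivAt_fst (𝕜 := ℝ) (p := p)).add
    ((hasFDerivAt_snd (𝕜 := ℝ) (p := p)).const_mul 2)

lemma hM3 (p : ℝ × ℝ) : HasFDerivAt (fun q : ℝ × ℝ => 1 + q.1 + q.2)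
    (fst ℝ ℝ ℝ + snd ℝ ℝ ℝ) p := by
  have h := ((hasFDerivAt_const (1:ℝ) p).add (hasFDerivAt_fst (𝕜 := ℝ) (p := p))).add
    (hasFDerivAt_snd (𝕜 := ℝ) (p := p))
  simp only [zero_add] at h
  exact h

theorem stmt_15
    (F : ℝ × ℝ → ℝ × ℝ)
    (hF : F = fun p => (p.1 - p.1 * p.2, -p.1 - p.2 - p.2 ^ 2)) :
    (∀ p : ℝ × ℝ, fderiv ℝ (fun q : ℝ × ℝ => q.1) p (F p) = p.1 * (1 - p.2)) ∧
    (∀ p : ℝ × ℝ, fderiv ℝ (fun q : ℝ × ℝ => q.1 + 2 * q.2) p (F p)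
        = (p.1 + 2 * p.2) * (-1 - p.2)) ∧
    (∀ p : ℝ × ℝ, fderiv ℝ (fun q : ℝ × ℝ => 1 + q.1 + q.2) p (F p)
        = (1 + p.1 + p.2) * (-p.2)) ∧
    (∀ p : ℝ × ℝ, p.1 ≠ 0 →
      fderiv ℝ (fun q : ℝ × ℝ => (1 + q.1 + q.2) / q.1) p (F p)
        = -((1 + p.1 + p.2) / p.1)) ∧
    (∀ p : ℝ × ℝ, p.1 + 2 * p.2 ≠ 0 →
      fderiv ℝ (fun q : ℝ × ℝ => (1 + q.1 + q.2) / (q.1 + 2 * q.2)) p (F p)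
        = (1 + p.1 + p.2) / (p.1 + 2 * p.2)) := by
  subst hF
  refine ⟨fun p => ?_, fun p => ?_, fun p => ?_, fun p hp => ?_, fun p hp => ?_⟩
  · rw [(hM1 p).fderiv]; simp; ring
  · rw [(hM2 p).fderiv]; simp; ring
  · rw [(hM3 p).fderiv]; simp; ring
  · have h := (hM3 p).mul ((hasDerivAt_inv hp).comp_hasFDerivAt p (hM1 p))
    simp only [Function.comp_def] at h
    simp only [div_eq_mul_inv]
    rw [HasFDerivAt.fderiv (f := fun q : ℝ × ℝ => (1 + q.1 + q.2) * q.1⁻¹) h]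
    simp [Function.comp]
    field_simp
    ring
  · have h := (hM3 p).mul ((hasDerivAt_inv hp).comp_hasFDerivAt p (hM2 p))
    simp only [Function.comp_def] at h
    simp only [div_eq_mul_inv]
    rw [HasFDerivAt.fderiv (f := fun q : ℝ × ℝ => (1 + q.1 + q.2) * (q.1 + 2 * q.2)⁻¹) h]
    simp [Function.comp]
    field_simp [show p.1 + p.2 * 2 ≠ 0 by rwa [mul_comm] at hp]
    ring
end

section
/- For the planar system x' = x − xy, y' = −y + x² − 2y² with F(x,y) = (x − xy, −y + x² − 2y²), the functions M₁ = x, M₂ = x² − 3y, M₃ = 1 − x² + 2y satisfy ∇M₁·F = M₁(1 − y), ∇M₂·F = M₂(−1 − 2y), and ∇M₃·F = M₃(−2y). Consequently φ₁ = −3M₃/M₂ satisfies ∇φ₁·F = φ₁ and φ₂ = M₃/M₁² satisfies ∇φ₂·F = −2φ₂ where denominators are nonzero. -/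
theorem stmt_17
    (F : ℝ × ℝ → ℝ × ℝ)
    (hF : F = fun p => (p.1 - p.1 * p.2, -p.2 + p.1 ^ 2 - 2 * p.2 ^ 2)) :
    (∀ p : ℝ × ℝ, fderiv ℝ (fun q : ℝ × ℝ => q.1) p (F p) = p.1 * (1 - p.2)) ∧
    (∀ p : ℝ × ℝ, fderiv ℝ (fun q : ℝ × ℝ => q.1 ^ 2 - 3 * q.2) p (F p)
        = (p.1 ^ 2 - 3 * p.2) * (-1 - 2 * p.2)) ∧
    (∀ p : ℝ × ℝ, fderiv ℝ (fun q : ℝ × ℝ => 1 - q.1 ^ 2 + 2 * q.2) p (F p)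
        = (1 - p.1 ^ 2 + 2 * p.2) * (-2 * p.2)) ∧
    (∀ p : ℝ × ℝ, p.1 ^ 2 - 3 * p.2 ≠ 0 →
      fderiv ℝ (fun q : ℝ × ℝ => -3 * (1 - q.1 ^ 2 + 2 * q.2) / (q.1 ^ 2 - 3 * q.2)) p (F p)
        = -3 * (1 - p.1 ^ 2 + 2 * p.2) / (p.1 ^ 2 - 3 * p.2)) ∧
    (∀ p : ℝ × ℝ, p.1 ≠ 0 →
      fderiv ℝ (fun q : ℝ × ℝ => (1 - q.1 ^ 2 + 2 * q.2) / q.1 ^ 2) p (F p)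
        = -2 * ((1 - p.1 ^ 2 + 2 * p.2) / p.1 ^ 2)) := by
  have hx : ∀ p : ℝ × ℝ, HasFDerivAt (fun q : ℝ × ℝ => q.1)
      (ContinuousLinearMap.fst ℝ ℝ ℝ) p := fun p => hasFDerivAt_fst
  have hy : ∀ p : ℝ × ℝ, HasFDerivAt (fun q : ℝ × ℝ => q.2)
      (ContinuousLinearMap.snd ℝ ℝ ℝ) p := fun p => hasFDerivAt_snd
  have hx2 : ∀ p : ℝ × ℝ, HasFDerivAt (fun q : ℝ × ℝ => q.1 ^ 2)
      (p.1 • ContinuousLinearMap.fst ℝ ℝ ℝ + p.1 • ContinuousLinearMap.fst ℝ ℝ ℝ) p := by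
    intro p
    have := (hx p).mul (hx p)
    simpa [pow_two, Pi.mul_def] using this
  have hM2 : ∀ p : ℝ × ℝ, HasFDerivAt (fun q : ℝ × ℝ => q.1 ^ 2 - 3 * q.2)
      ((p.1 • ContinuousLinearMap.fst ℝ ℝ ℝ + p.1 • ContinuousLinearMap.fst ℝ ℝ ℝ)
        - (3 : ℝ) • ContinuousLinearMap.snd ℝ ℝ ℝ) p :=
    fun p => (hx2 p).sub ((hy p).const_mul 3)
  have hM3 : ∀ p : ℝ × ℝ, HasFDerivAt (fun q : ℝ × ℝ => 1 - q.1 ^ 2 + 2 * q.2)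
      ((0 - (p.1 • ContinuousLinearMap.fst ℝ ℝ ℝ + p.1 • ContinuousLinearMap.fst ℝ ℝ ℝ))
        + (2 : ℝ) • ContinuousLinearMap.snd ℝ ℝ ℝ) p :=
    fun p => ((hasFDerivAt_const (1:ℝ) p).sub (hx2 p)).add ((hy p).const_mul 2)
  refine ⟨fun p => ?_, fun p => ?_, fun p => ?_, fun p hp => ?_, fun p hp => ?_⟩
  · rw [(hx p).fderiv]; simp [hF]; ring
  · rw [(hM2 p).fderiv]; simp [hF]; ring
  · rw [(hM3 p).fderiv]; simp [hF]; ring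
  · have hN : HasFDerivAt (fun q : ℝ × ℝ => -3 * (1 - q.1 ^ 2 + 2 * q.2))
        ((-3 : ℝ) • ((0 - (p.1 • ContinuousLinearMap.fst ℝ ℝ ℝ
            + p.1 • ContinuousLinearMap.fst ℝ ℝ ℝ))
          + (2 : ℝ) • ContinuousLinearMap.snd ℝ ℝ ℝ)) p := (hM3 p).const_mul (-3)
    have hinv := (hasFDerivAt_inv (𝕜 := ℝ) hp).comp p (hM2 p)
    have h := hN.mul hinv
    simp only [Function.comp_def, Pi.mul_def] at h
    have heq : (fun q : ℝ × ℝ => -3 * (1 - q.1 ^ 2 + 2 * q.2) / (q.1 ^ 2 - 3 * q.2))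
        = fun q : ℝ × ℝ => -3 * (1 - q.1 ^ 2 + 2 * q.2) * (q.1 ^ 2 - 3 * q.2)⁻¹ := by
      funext q; rw [div_eq_mul_inv]
    rw [heq, h.fderiv]
    simp [hF]
    field_simp
    ring
  · have hx2ne : p.1 ^ 2 ≠ 0 := pow_ne_zero 2 hp
    have hinv := (hasFDerivAt_inv (𝕜 := ℝ) hx2ne).comp p (hx2 p)
    have h := (hM3 p).mul hinv
    simp only [Function.comp_def, Pi.mul_def] at h
    have heq : (fun q : ℝ × ℝ => (1 - q.1 ^ 2 + 2 * q.2) / q.1 ^ 2)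
        = fun q : ℝ × ℝ => (1 - q.1 ^ 2 + 2 * q.2) * (q.1 ^ 2)⁻¹ := by
      funext q; rw [div_eq_mul_inv]
    rw [heq, h.fderiv]
    simp [hF]
    field_simp
    ring
end
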